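/- Hall-condition verification lemma: under the hypotheses that every patient is a beneficiary of at most b sparse categories and |B_c| ≥ min{q, b·r_c} for every category c (where c is sparse if |B_c| < q and q = Σ_c r_c), it holds that for every subset S of categories, |⋃_{c∈S} B_c| ≥ Σ_{c∈S} r_c. -/
import Mathlib


open scoped Classical

/-- Hall-condition verification: if every patient is a beneficiary of at most `b` sparse
categories (`c` is sparse when `|B c| < q`, `q = ∑ c, r c`) and `|B c| ≥ min q (b * r c)`
for every category, then Hall's condition holds for every subset of categories. -/
theorem hall_condition {ι κ : Type*} [Fintype ι] [Fintype κ] [DecidableEq ι]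
    (r : κ → ℕ) (B : κ → Finset ι) (b : ℕ) (hb : 0 < b) (hr : ∀ c, 0 < r c)
    (hsparse : ∀ i : ι,
      (Finset.univ.filter fun c : κ => i ∈ B c ∧ (B c).card < ∑ c', r c').card ≤ b)
    (hB : ∀ c, min (∑ c', r c') (b * r c) ≤ (B c).card) :
    ∀ S : Finset κ, ∑ c ∈ S, r c ≤ (S.biUnion B).card := by
  intro S
  set q := ∑ c', r c' with hq
  by_cases h : ∃ c ∈ S, q ≤ (B c).card
  · obtain ⟨c, hc, hcq⟩ := h
    have h1 : ∑ c ∈ S, r c ≤ q :=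
      Finset.sum_le_sum_of_subset (Finset.subset_univ S)
    have h2 : B c ⊆ S.biUnion B := fun i hi =>
      Finset.mem_biUnion.mpr ⟨c, hc, hi⟩
    have := Finset.card_le_card h2
    omega
  · push_neg at h
    have key : ∀ c ∈ S, b * r c ≤ (B c).card := by
      intro c hc
      have h1 := hB c
      have h2 := h c hc
      rcases min_cases q (b * r c) with ⟨he, _⟩ | ⟨he, _⟩ <;> omega
    -- double counting
    have hcount : ∀ c ∈ S, (B c).card
        = ((S.biUnion B).filter fun i => i ∈ B c).card := by
      intro c hc
      congr 1
      rw [Finset.filter_mem_eq_inter]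
      exact (Finset.inter_eq_right.mpr fun i hi => Finset.mem_biUnion.mpr ⟨c, hc, hi⟩).symm
    have hdc : ∑ c ∈ S, (B c).card
        = ∑ i ∈ S.biUnion B, (S.filter fun c => i ∈ B c).card := by
      calc ∑ c ∈ S, (B c).card
          = ∑ c ∈ S, ∑ i ∈ S.biUnion B, (if i ∈ B c then 1 else 0) := by
            refine Finset.sum_congr rfl fun c hc => ?_
            rw [hcount c hc, Finset.card_filter]
        _ = ∑ i ∈ S.biUnion B, ∑ c ∈ S, (if i ∈ B c then 1 else 0) :=
            Finset.sum_comm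
        _ = ∑ i ∈ S.biUnion B, (S.filter fun c => i ∈ B c).card := by
            refine Finset.sum_congr rfl fun i _ => (Finset.card_filter _ _).symm
    have hbound : ∀ i ∈ S.biUnion B, (S.filter fun c => i ∈ B c).card ≤ b := by
      intro i _
      refine le_trans (Finset.card_le_card ?_) (hsparse i)
      intro c hc
      simp only [Finset.mem_filter] at hc ⊢
      exact ⟨Finset.mem_univ c, hc.2, h c hc.1⟩
    have main : b * ∑ c ∈ S, r c ≤ b * (S.biUnion B).card := by
      calc b * ∑ c ∈ S, r c = ∑ c ∈ S, b * r c := Finset.mul_sum _ _ _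
        _ ≤ ∑ c ∈ S, (B c).card := Finset.sum_le_sum key
        _ = ∑ i ∈ S.biUnion B, (S.filter fun c => i ∈ B c).card := hdc
        _ ≤ ∑ i ∈ S.biUnion B, b := Finset.sum_le_sum hbound
        _ = b * (S.biUnion B).card := by rw [Finset.sum_const, smul_eq_mul, mul_comm]
    exact Nat.le_of_mul_le_mul_left main hb
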